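/- Let p be a prime, 1 < k < p, and A ⊆ ℤ/pℤ with |A| = m. Then the number of k-element subsets σ of ℤ/pℤ whose elements sum to an element of A equals (m/p)·C(p,k) = (m/k)·C(p-1,k-1). -/

import Mathlib

open Finset

private def cnt (p k : ℕ) [NeZero p] (s : ZMod p) : ℕ :=
  (((Finset.univ : Finset (ZMod p)).powersetCard k).filter (fun σ => (∑ x ∈ σ, x) = s)).card

private lemma cnt_const (p k : ℕ) (hp : p.Prime) [NeZero p] (hk1 : 0 < k) (hkp : k < p)
    (s t : ZMod p) : cnt p k s = cnt p k t := by
  haveI : Fact p.Prime := ⟨hp⟩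
  have hk0 : (k : ZMod p) ≠ 0 := by
    rw [Ne, ZMod.natCast_eq_zero_iff]
    exact fun h => absurd (Nat.le_of_dvd hk1 h) (not_le.2 hkp)
  set c : ZMod p := (t - s) / (k : ZMod p) with hc
  have hkc : (k : ZMod p) * c = t - s := by
    rw [hc, mul_div_assoc', mul_div_cancel_left₀ _ hk0]
  have key : ∀ (u v : ZMod p) (σ : Finset (ZMod p)), σ.card = k → (∑ x ∈ σ, x) = u →
      (∑ x ∈ σ.map (Equiv.toEmbedding (Equiv.addRight (v))), x) = u + k • v := by
    intro u v σ hcard hsum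
    rw [Finset.sum_map]
    simp only [Equiv.toEmbedding_apply, Equiv.coe_addRight]
    rw [Finset.sum_add_distrib, hsum, Finset.sum_const, hcard]
  unfold cnt
  apply Finset.card_bij' (fun σ _ => σ.map (Equiv.toEmbedding (Equiv.addRight c)))
    (fun σ _ => σ.map (Equiv.toEmbedding (Equiv.addRight (-c))))
  · intro σ hσ
    ext x
    simp [Finset.mem_map]
  · intro σ hσ
    ext x
    simp [Finset.mem_map]
  · intro σ hσ
    simp only [Finset.mem_filter, Finset.mem_powersetCard_univ] at hσ ⊢
    refine ⟨by simp [hσ.1], ?_⟩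
    rw [key s c σ hσ.1 hσ.2]
    rw [nsmul_eq_mul, hkc]
    ring
  · intro σ hσ
    simp only [Finset.mem_filter, Finset.mem_powersetCard_univ] at hσ ⊢
    refine ⟨by simp [hσ.1], ?_⟩
    rw [key t (-c) σ hσ.1 hσ.2]
    rw [nsmul_eq_mul, mul_neg, hkc]
    ring

/-- The number of `k`-element subsets of `ℤ/pℤ` whose elements sum to an element of `A`
equals `(m/p)·C(p,k) = (m/k)·C(p-1,k-1)` (stated multiplicatively to avoid division). -/
theorem sum_complex_top_face_count (p k m : ℕ) (hp : p.Prime) [NeZero p]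
    (hk1 : 1 < k) (hkp : k < p) (A : Finset (ZMod p)) (hm : A.card = m) :
    p * (((Finset.univ : Finset (ZMod p)).powersetCard k).filter
        (fun σ => (∑ x ∈ σ, x) ∈ A)).card = m * Nat.choose p k ∧
    k * (((Finset.univ : Finset (ZMod p)).powersetCard k).filter
        (fun σ => (∑ x ∈ σ, x) ∈ A)).card = m * Nat.choose (p - 1) (k - 1) := by
  haveI : Fact p.Prime := ⟨hp⟩
  have hk0 : 0 < k := lt_trans one_pos hk1
  set S := ((Finset.univ : Finset (ZMod p)).powersetCard k) with hS
  -- total count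
  have htot : ∑ s : ZMod p, cnt p k s = Nat.choose p k := by
    have hScard : ((Finset.univ : Finset (ZMod p)).powersetCard k).card = Nat.choose p k := by
      rw [Finset.card_powersetCard, Finset.card_univ, ZMod.card]
    rw [← hScard]
    exact (Finset.card_eq_sum_card_fiberwise (fun σ _ => Finset.mem_univ _)).symm
  have hconst : ∀ s : ZMod p, cnt p k s = cnt p k 0 := fun s => cnt_const p k hp hk0 hkp s 0
  have hptot : p * cnt p k 0 = Nat.choose p k := by
    rw [← htot, Finset.sum_congr rfl (fun s _ => hconst s), Finset.sum_const, Finset.card_univ,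
      ZMod.card, smul_eq_mul]
  have hA : (S.filter (fun σ => (∑ x ∈ σ, x) ∈ A)).card = m * cnt p k 0 := by
    have := Finset.card_eq_sum_card_fiberwise
      (f := fun σ : Finset (ZMod p) => ∑ x ∈ σ, x)
      (s := S.filter (fun σ => (∑ x ∈ σ, x) ∈ A)) (t := A)
      (fun σ hσ => (Finset.mem_filter.1 hσ).2)
    rw [this]
    have heach : ∀ s ∈ A, ((S.filter (fun σ => (∑ x ∈ σ, x) ∈ A)).filter
        (fun σ => (∑ x ∈ σ, x) = s)).card = cnt p k 0 := by
      intro s hs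
      have heq : (S.filter (fun σ => (∑ x ∈ σ, x) ∈ A)).filter
          (fun σ => (∑ x ∈ σ, x) = s) = S.filter (fun σ => (∑ x ∈ σ, x) = s) := by
        rw [Finset.filter_filter]
        apply Finset.filter_congr
        intro σ _
        constructor
        · exact fun h => h.2
        · exact fun h => ⟨h ▸ hs, h⟩
      rw [heq]
      exact hconst s
    rw [Finset.sum_congr rfl heach, Finset.sum_const, smul_eq_mul, hm]
  constructor
  · rw [hA, ← mul_assoc, mul_comm p m, mul_assoc, hptot]
  · rw [hA]
    have hid : Nat.choose p k * k = p * Nat.choose (p - 1) (k - 1) := by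
      have := Nat.add_one_mul_choose_eq (p - 1) (k - 1)
      have hp1 : p - 1 + 1 = p := Nat.succ_pred_eq_of_pos hp.pos
      have hk1' : k - 1 + 1 = k := Nat.succ_pred_eq_of_pos hk0
      rw [hp1, hk1'] at this
      omega
    have : p * (k * (m * cnt p k 0)) = p * (m * Nat.choose (p - 1) (k - 1)) := by
      calc p * (k * (m * cnt p k 0)) = m * (Nat.choose p k * k) := by
            rw [← hptot]; ring
        _ = p * (m * Nat.choose (p - 1) (k - 1)) := by rw [hid]; ring
    exact Nat.eq_of_mul_eq_mul_left hp.pos this
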